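/- Compatibility with the polynomial sector. For every operator D in the family {z^γ·D^(𝐧) : [γ] ≥ 0, 𝐧 ∈ ℕ²} ∪ {∂₁, ∂₂}, every multi-index γ′ with [γ′] ≥ 0, and every 𝐦 ∈ ℕ²∖{0}: the z^{e_𝐦}-coefficient of D(z^{γ′}) vanishes. (Equivalently, the transposed operators preserve the polynomial sector spanned by the unit multi-indices {e_𝐦}_{𝐦≠0}.) -/

import Mathlib

open MvPolynomial

abbrev N2 : Type := {p : ℕ × ℕ // p ≠ (0, 0)}
abbrev Idx : Type := ℕ ⊕ N2
abbrev MIdx : Type := Idx →₀ ℕ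
abbrev PS : Type := MvPowerSeries Idx ℝ

noncomputable section

/-- the weight `|𝐧| = w₁ n₁ + w₂ n₂` of `𝐧 ∈ ℕ²`. -/
def wt (w₁ w₂ : ℝ) (n : ℕ × ℕ) : ℝ := w₁ * n.1 + w₂ * n.2

/-- `[γ] = Σ_k k γ(k) − Σ_{𝐧≠0} γ(𝐧)`. -/
def brk (γ : MIdx) : ℤ :=
  γ.sum fun i n =>
    match i with
    | Sum.inl k => (k : ℤ) * n
    | Sum.inr _ => -(n : ℤ)

/-- `Σ_{𝐦≠0} |𝐦| γ(𝐦)`. -/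
def wsum (w₁ w₂ : ℝ) (γ : MIdx) : ℝ :=
  γ.sum fun i n =>
    match i with
    | Sum.inl _ => 0
    | Sum.inr m => wt w₁ w₂ m.1 * n

/-- the homogeneity `|γ| = α([γ]+1) + Σ_{𝐧≠0}|𝐧|γ(𝐧)`. -/
def homdeg (α w₁ w₂ : ℝ) (γ : MIdx) : ℝ := α * ((brk γ : ℝ) + 1) + wsum w₁ w₂ γ

/-! ### operators on monomials (polynomial level) -/

/-- `D^(0) z^γ = Σ_k (k+1) γ(k) z^{γ - e_k + e_{k+1}}`. -/
def D0mono (γ : MIdx) : MvPolynomial Idx ℝ :=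
  γ.sum fun i n =>
    match i with
    | Sum.inl k =>
        (((k + 1) * n : ℕ) : ℝ) •
          monomial (γ - Finsupp.single (Sum.inl k) 1 + Finsupp.single (Sum.inl (k + 1)) 1) 1
    | Sum.inr _ => 0

/-- `D^(𝐧) z^γ = ∂_{z_𝐧} z^γ` for `𝐧 ≠ 0`. -/
def DNmono (m : N2) (γ : MIdx) : MvPolynomial Idx ℝ :=
  ((γ (Sum.inr m) : ℕ) : ℝ) • monomial (γ - Finsupp.single (Sum.inr m) 1) 1

/-- `D^(𝐧) z^γ` for arbitrary `𝐧 ∈ ℕ²`. -/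
def Dmono (n : ℕ × ℕ) (γ : MIdx) : MvPolynomial Idx ℝ :=
  if h : n = (0, 0) then D0mono γ else DNmono ⟨n, h⟩ γ

lemma add10_ne (n : ℕ × ℕ) : n + (1, 0) ≠ (0, 0) := by
  intro h
  exact Nat.succ_ne_zero n.1 (congrArg Prod.fst h)

lemma add01_ne (n : ℕ × ℕ) : n + (0, 1) ≠ (0, 0) := by
  intro h
  exact Nat.succ_ne_zero n.2 (congrArg Prod.snd h)

def v10 : N2 := ⟨(1, 0), by decide⟩
def v01 : N2 := ⟨(0, 1), by decide⟩

/-- `∂₁ z^γ = z_{(1,0)} D^(0) z^γ + Σ_{𝐧≠0} (n₁+1) z_{𝐧+(1,0)} ∂_{z_𝐧} z^γ`. -/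
def d1mono (γ : MIdx) : MvPolynomial Idx ℝ :=
  X (Sum.inr v10) * D0mono γ +
    γ.sum fun i n =>
      match i with
      | Sum.inl _ => 0
      | Sum.inr m =>
          (((m.1.1 + 1) * n : ℕ) : ℝ) •
            monomial
              (γ - Finsupp.single (Sum.inr m) 1 +
                Finsupp.single (Sum.inr ⟨m.1 + (1, 0), add10_ne m.1⟩) 1) 1

/-- `∂₂ z^γ`. -/
def d2mono (γ : MIdx) : MvPolynomial Idx ℝ :=
  X (Sum.inr v01) * D0mono γ +
    γ.sum fun i n =>
      match i with
      | Sum.inl _ => 0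
      | Sum.inr m =>
          (((m.1.2 + 1) * n : ℕ) : ℝ) •
            monomial
              (γ - Finsupp.single (Sum.inr m) 1 +
                Finsupp.single (Sum.inr ⟨m.1 + (0, 1), add01_ne m.1⟩) 1) 1

/-! ### operators on power series (coefficientwise) -/

/-- coefficient of `D^(0) f` at `β`. -/
def D0coeff (f : PS) (β : MIdx) : ℝ :=
  ∑ i ∈ β.support,
    match i with
    | Sum.inl (k + 1) =>
        (((k + 1) * (β (Sum.inl k) + 1) : ℕ) : ℝ) *
          MvPowerSeries.coeff
            (β + Finsupp.single (Sum.inl k) 1 - Finsupp.single (Sum.inl (k + 1)) 1) f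
    | _ => 0

/-- `D^(0)` on power series. -/
def D0series (f : PS) : PS := D0coeff f

/-- `D^(𝐧) = ∂_{z_𝐧}` on power series, `𝐧 ≠ 0`. -/
def DNseries (m : N2) (f : PS) : PS :=
  fun β => ((β (Sum.inr m) + 1 : ℕ) : ℝ) *
    MvPowerSeries.coeff (β + Finsupp.single (Sum.inr m) 1) f

/-- `D^(𝐧)` on power series for arbitrary `𝐧 ∈ ℕ²`. -/
def Dseries (n : ℕ × ℕ) (f : PS) : PS :=
  if h : n = (0, 0) then D0series f else DNseries ⟨n, h⟩ f

/-- coefficient of `∂₁ f` at `β`. -/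
def d1coeff (f : PS) (β : MIdx) : ℝ :=
  (if 1 ≤ β (Sum.inr v10) then D0coeff f (β - Finsupp.single (Sum.inr v10) 1) else 0) +
    ∑ i ∈ β.support,
      match i with
      | Sum.inl _ => 0
      | Sum.inr p =>
          if hp : ((p.1.1 - 1, p.1.2) : ℕ × ℕ) ≠ (0, 0) ∧ 1 ≤ p.1.1 then
            (p.1.1 : ℝ) *
              ((((β - Finsupp.single (Sum.inr p) 1 : MIdx) (Sum.inr ⟨(p.1.1 - 1, p.1.2), hp.1⟩) : ℕ) + 1 : ℕ) : ℝ) *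
              MvPowerSeries.coeff
                (β - Finsupp.single (Sum.inr p) 1 +
                  Finsupp.single (Sum.inr ⟨(p.1.1 - 1, p.1.2), hp.1⟩) 1) f
          else 0

/-- `∂₁` on power series. -/
def d1series (f : PS) : PS := d1coeff f

/-- coefficient of `∂₂ f` at `β`. -/
def d2coeff (f : PS) (β : MIdx) : ℝ :=
  (if 1 ≤ β (Sum.inr v01) then D0coeff f (β - Finsupp.single (Sum.inr v01) 1) else 0) +
    ∑ i ∈ β.support,
      match i with
      | Sum.inl _ => 0
      | Sum.inr p =>
          if hp : ((p.1.1, p.1.2 - 1) : ℕ × ℕ) ≠ (0, 0) ∧ 1 ≤ p.1.2 then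
            (p.1.2 : ℝ) *
              ((((β - Finsupp.single (Sum.inr p) 1 : MIdx) (Sum.inr ⟨(p.1.1, p.1.2 - 1), hp.1⟩) : ℕ) + 1 : ℕ) : ℝ) *
              MvPowerSeries.coeff
                (β - Finsupp.single (Sum.inr p) 1 +
                  Finsupp.single (Sum.inr ⟨(p.1.1, p.1.2 - 1), hp.1⟩) 1) f
          else 0

/-- `∂₂` on power series. -/
def d2series (f : PS) : PS := d2coeff f

/-- the operator `z^γ·D^(𝐧)` on power series. -/
def opOf (γ : MIdx) (n : ℕ × ℕ) (f : PS) : PS :=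
  MvPowerSeries.monomial γ 1 * Dseries n f

/-- the dual model space `T̃*`. -/
def Ttilde : Set PS := {f | ∀ γ : MIdx, MvPowerSeries.coeff γ f ≠ 0 → 0 ≤ brk γ}

/-- the dual model space `T*`. -/
def Tstar : Set PS :=
  {f | ∀ γ : MIdx, MvPowerSeries.coeff γ f ≠ 0 →
      0 ≤ brk γ ∨ ∃ m : N2, γ = Finsupp.single (Sum.inr m) 1}

/-! ### topology and the realization property -/

instance : TopologicalSpace PS := inferInstanceAs (TopologicalSpace ((Idx →₀ ℕ) → ℝ))

/-- `Γ` realizes the family `(π^(𝐧))_{𝐧∈ℕ²}`. -/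
def Realizes (Γ : PS →ₐ[ℝ] PS) (π : ℕ × ℕ → PS) : Prop :=
  Continuous Γ ∧
    (∀ m : N2, Γ (MvPowerSeries.X (Sum.inr m)) = MvPowerSeries.X (Sum.inr m) + π m.1) ∧
    (∀ k : ℕ, HasSum
      (fun l : ℕ => ((k + l).choose k : ℝ) • (π (0, 0) ^ l * MvPowerSeries.X (Sum.inl (k + l))))
      (Γ (MvPowerSeries.X (Sum.inl k))))

end


/-! ### auxiliary lemmas for `stmt8` -/

lemma brk_single_inl (k n : ℕ) : brk (Finsupp.single (Sum.inl k) n) = (k : ℤ) * n := by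
  simp [brk, Finsupp.sum_single_index]

lemma brk_single_inr (m : N2) (n : ℕ) : brk (Finsupp.single (Sum.inr m) n) = -(n : ℤ) := by
  simp [brk, Finsupp.sum_single_index]

lemma brk_add (a b : MIdx) : brk (a + b) = brk a + brk b := by
  unfold brk
  apply Finsupp.sum_add_index
  · intro i _; cases i <;> simp
  · intro i _ m n; cases i <;> (push_cast; ring)

lemma sub_single_add (γ : MIdx) (i : Idx) (h : 1 ≤ γ i) :
    γ - Finsupp.single i 1 + Finsupp.single i 1 = γ := by
  ext j
  rcases eq_or_ne j i with rfl | hj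
  · simp [Finsupp.single_apply]
    omega
  · simp [Finsupp.single_apply, Ne.symm hj]

lemma brk_sub_single (γ : MIdx) (i : Idx) (h : 1 ≤ γ i) :
    brk (γ - Finsupp.single i 1) = brk γ - brk (Finsupp.single i 1) := by
  have := brk_add (γ - Finsupp.single i 1) (Finsupp.single i 1)
  rw [sub_single_add γ i h] at this
  omega

lemma coeff_em_monomial (β : MIdx) (m : N2) (h : 0 ≤ brk β) (c : ℝ) :
    MvPolynomial.coeff (Finsupp.single (Sum.inr m) 1) (MvPolynomial.monomial β c) = 0 := by
  rw [MvPolynomial.coeff_monomial, if_neg]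
  intro heq
  rw [heq, brk_single_inr] at h
  norm_num at h

lemma coeff_em_mul_D0 (γ γ' : MIdx) (h : 0 ≤ brk γ) (h' : 0 ≤ brk γ') (m : N2) :
    MvPolynomial.coeff (Finsupp.single (Sum.inr m) 1)
      (MvPolynomial.monomial γ 1 * D0mono γ') = 0 := by
  rw [D0mono, Finsupp.sum, Finset.mul_sum, MvPolynomial.coeff_sum]
  apply Finset.sum_eq_zero
  intro i hi
  rcases i with k | p
  · have hk : 1 ≤ γ' (Sum.inl k) := Nat.one_le_iff_ne_zero.mpr (Finsupp.mem_support_iff.mp hi)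
    rw [mul_smul_comm, MvPolynomial.monomial_mul, mul_one, MvPolynomial.smul_eq_C_mul,
      MvPolynomial.coeff_C_mul]
    rw [coeff_em_monomial, mul_zero]
    rw [← add_assoc, brk_add, brk_add, brk_sub_single _ _ hk, brk_single_inl, brk_single_inl]
    push_cast
    omega
  · simp

lemma coeff_em_smul_monomial (β : MIdx) (m : N2) (h : 0 ≤ brk β) (c : ℝ) :
    MvPolynomial.coeff (Finsupp.single (Sum.inr m) 1)
      (c • MvPolynomial.monomial β (1 : ℝ)) = 0 := by
  rw [MvPolynomial.smul_eq_C_mul, MvPolynomial.coeff_C_mul, coeff_em_monomial _ _ h, mul_zero]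

/-- **Compatibility with the polynomial sector.** -/
theorem stmt8 :
    (∀ (γ : MIdx) (n : ℕ × ℕ), 0 ≤ brk γ → ∀ γ' : MIdx, 0 ≤ brk γ' → ∀ m : N2,
        MvPolynomial.coeff (Finsupp.single (Sum.inr m) 1)
          (MvPolynomial.monomial γ 1 * Dmono n γ') = 0) ∧
    (∀ γ' : MIdx, 0 ≤ brk γ' → ∀ m : N2,
        MvPolynomial.coeff (Finsupp.single (Sum.inr m) 1) (d1mono γ') = 0) ∧
    (∀ γ' : MIdx, 0 ≤ brk γ' → ∀ m : N2,
        MvPolynomial.coeff (Finsupp.single (Sum.inr m) 1) (d2mono γ') = 0) := by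
  refine ⟨?_, ?_, ?_⟩
  · intro γ n h γ' h' m
    rw [Dmono]
    split
    · exact coeff_em_mul_D0 γ γ' h h' m
    · rw [DNmono, mul_smul_comm, MvPolynomial.smul_eq_C_mul, MvPolynomial.coeff_C_mul]
      rcases Nat.eq_zero_or_pos (γ' (Sum.inr ⟨n, by assumption⟩)) with h0 | h0
      · simp [h0]
      · rw [MvPolynomial.monomial_mul, mul_one, coeff_em_monomial, mul_zero]
        rw [brk_add, brk_sub_single _ _ h0, brk_single_inr]
        omega
  · intro γ' h' m
    rw [d1mono, MvPolynomial.coeff_add]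
    have hX : (MvPolynomial.X (Sum.inr v10) : MvPolynomial Idx ℝ) =
        MvPolynomial.monomial (Finsupp.single (Sum.inr v10) 1) 1 := by
      simp [MvPolynomial.X]
    rw [hX]
    have h1 : MvPolynomial.coeff (Finsupp.single (Sum.inr m) 1)
        (MvPolynomial.monomial (Finsupp.single (Sum.inr v10) 1) 1 * D0mono γ') = 0 := by
      rw [D0mono, Finsupp.sum, Finset.mul_sum, MvPolynomial.coeff_sum]
      apply Finset.sum_eq_zero
      intro i hi
      rcases i with k | p
      · have hk : 1 ≤ γ' (Sum.inl k) := Nat.one_le_iff_ne_zero.mpr (Finsupp.mem_support_iff.mp hi)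
        rw [mul_smul_comm, MvPolynomial.smul_eq_C_mul, MvPolynomial.coeff_C_mul,
          MvPolynomial.monomial_mul, mul_one, coeff_em_monomial, mul_zero]
        rw [← add_assoc, brk_add, brk_add, brk_sub_single _ _ hk, brk_single_inl,
          brk_single_inl, brk_single_inr]
        push_cast
        omega
      · simp
    rw [h1, zero_add, Finsupp.sum, MvPolynomial.coeff_sum]
    apply Finset.sum_eq_zero
    intro i hi
    rcases i with k | p
    · simp
    · have hk : 1 ≤ γ' (Sum.inr p) := Nat.one_le_iff_ne_zero.mpr (Finsupp.mem_support_iff.mp hi)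
      rw [coeff_em_smul_monomial]
      rw [brk_add, brk_sub_single _ _ hk, brk_single_inr, brk_single_inr]
      omega
  · intro γ' h' m
    rw [d2mono, MvPolynomial.coeff_add]
    have hX : (MvPolynomial.X (Sum.inr v01) : MvPolynomial Idx ℝ) =
        MvPolynomial.monomial (Finsupp.single (Sum.inr v01) 1) 1 := by
      simp [MvPolynomial.X]
    rw [hX]
    have h1 : MvPolynomial.coeff (Finsupp.single (Sum.inr m) 1)
        (MvPolynomial.monomial (Finsupp.single (Sum.inr v01) 1) 1 * D0mono γ') = 0 := by
      rw [D0mono, Finsupp.sum, Finset.mul_sum, MvPolynomial.coeff_sum]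
      apply Finset.sum_eq_zero
      intro i hi
      rcases i with k | p
      · have hk : 1 ≤ γ' (Sum.inl k) := Nat.one_le_iff_ne_zero.mpr (Finsupp.mem_support_iff.mp hi)
        rw [mul_smul_comm, MvPolynomial.smul_eq_C_mul, MvPolynomial.coeff_C_mul,
          MvPolynomial.monomial_mul, mul_one, coeff_em_monomial, mul_zero]
        rw [← add_assoc, brk_add, brk_add, brk_sub_single _ _ hk, brk_single_inl,
          brk_single_inl, brk_single_inr]
        push_cast
        omega
      · simp
    rw [h1, zero_add, Finsupp.sum, MvPolynomial.coeff_sum]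
    apply Finset.sum_eq_zero
    intro i hi
    rcases i with k | p
    · simp
    · have hk : 1 ≤ γ' (Sum.inr p) := Nat.one_le_iff_ne_zero.mpr (Finsupp.mem_support_iff.mp hi)
      rw [coeff_em_smul_monomial]
      rw [brk_add, brk_sub_single _ _ hk, brk_single_inr, brk_single_inr]
      omega
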